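/- Let (λ, a', s) and (λ, b', t) be non-vertical Heisenberg translations (so a' ≠ 0 and b' ≠ 0). Then there exists R̂ ∈ Ĝ with R̂(e,0) ∈ ℂ·(e,0) such that R̂ ∘ (λ,a',s) ∘ R̂⁻¹ = (λ, b', t). In particular, all non-vertical Heisenberg translations with the same λ are conjugate in Ĝ. -/

import Mathlib

set_option linter.unusedSectionVars false
set_option linter.unusedVariables false
set_option maxHeartbeats 1600000


noncomputable section

variable {H : Type*} [NormedAddCommGroup H] [InnerProductSpace ℂ H] [CompleteSpace H]

/-- The Hermitian form `Â((x,z),(y,w)) = -z·conj⟨y,e⟩ - ⟨x,e⟩·conj w + ⟨x',y'⟩`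
(paper convention: linear in the first argument, with `⟨a,b⟩ = inner ℂ b a` in Mathlib,
and `x' = x - ⟨x,e⟩e`). -/
def hatA (e : H) (u v : H × ℂ) : ℂ :=
  - u.2 * (inner ℂ v.1 e : ℂ) - (inner ℂ e u.1 : ℂ) * (starRingEnd ℂ) v.2
    + (inner ℂ (v.1 - (inner ℂ e v.1 : ℂ) • e) (u.1 - (inner ℂ e u.1 : ℂ) • e) : ℂ)

/-- Membership in the group `Ĝ` of bounded bijective linear maps preserving `Â`. -/
def memGhat (e : H) (T : (H × ℂ) →L[ℂ] (H × ℂ)) : Prop :=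
  Function.Bijective T ∧ ∀ u v : H × ℂ, hatA e (T u) (T v) = hatA e u v

/-- `T` is the Heisenberg translation `(λ, a', s)`: an element of `Ĝ` sending
`(x,z)` to `λ·((⟨x,e⟩ + ⟨x',a'⟩ + s·z)·e + x' + z·a', z)`, where `|λ| = 1`,
`a' ⊥ e`, `s ≠ 0` and `Re s = ‖a'‖²/2`. -/
def IsHeisenberg (e : H) (T : (H × ℂ) →L[ℂ] (H × ℂ)) (lam : ℂ) (a' : H) (s : ℂ) :
    Prop :=
  ‖lam‖ = 1 ∧ a' ∈ (ℂ ∙ e)ᗮ ∧ s ≠ 0 ∧ s.re = (1 / 2) * ‖a'‖ ^ 2 ∧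
  memGhat e T ∧
  ∀ (x : H) (z : ℂ),
    T (x, z) = lam •
      (((((inner ℂ e x : ℂ) + (inner ℂ a' (x - (inner ℂ e x : ℂ) • e) : ℂ) + s * z) • e
          + (x - (inner ℂ e x : ℂ) • e) + z • a', z)) : H × ℂ)

/-- `K†`, the `Â`-orthogonal complement of a subspace `K` of `H ⊕ ℂ`. -/
def daggerHat (e : H) (K : Submodule ℂ (H × ℂ)) : Submodule ℂ (H × ℂ) where
  carrier := {v | ∀ m ∈ K, hatA e v m = 0}
  add_mem' := by
    intro a b ha hb m hm
    have h1 := ha m hm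
    have h2 := hb m hm
    simp only [hatA, Prod.fst_add, Prod.snd_add, inner_add_right, inner_sub_right,
      inner_smul_right, add_smul] at *
    ring_nf at *
    linear_combination h1 + h2
  zero_mem' := by
    intro m hm
    simp [hatA]
  smul_mem' := by
    intro c a ha m hm
    have h1 := ha m hm
    simp only [hatA, Prod.smul_fst, Prod.smul_snd, inner_smul_right, inner_sub_right,
      smul_eq_mul, smul_smul] at *
    ring_nf at *
    linear_combination c * h1

end

noncomputable section
variable {H : Type*} [NormedAddCommGroup H] [InnerProductSpace ℂ H] [CompleteSpace H]

-- helper maps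

def dilD (e : H) (c : ℂ) : (H × ℂ) →L[ℂ] (H × ℂ) :=
  ((ContinuousLinearMap.fst ℂ H ℂ) +
    (((c - 1) • ((innerSL ℂ e).comp (ContinuousLinearMap.fst ℂ H ℂ))).smulRight e)).prod
    ((starRingEnd ℂ c)⁻¹ • ContinuousLinearMap.snd ℂ H ℂ)

lemma dilD_apply (e : H) (c : ℂ) (x : H) (z : ℂ) :
    dilD e c (x, z) = (x + ((c - 1) * (inner ℂ e x : ℂ)) • e, (starRingEnd ℂ c)⁻¹ * z) := by
  simp [dilD, ContinuousLinearMap.smulRight_apply, mul_smul]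

def reflU (w : H) (κ : ℝ) : H →L[ℂ] H :=
  ContinuousLinearMap.id ℂ H - (((2 / κ : ℂ) • innerSL ℂ w).smulRight w)

lemma reflU_apply (w : H) (κ : ℝ) (x : H) :
    reflU w κ x = x - ((2 / κ : ℂ) * (inner ℂ w x : ℂ)) • w := by
  simp [reflU, ContinuousLinearMap.smulRight_apply, mul_smul]

def liftU (U : H →L[ℂ] H) : (H × ℂ) →L[ℂ] (H × ℂ) :=
  (U.comp (ContinuousLinearMap.fst ℂ H ℂ)).prod (ContinuousLinearMap.snd ℂ H ℂ)

lemma liftU_apply (U : H →L[ℂ] H) (x : H) (z : ℂ) : liftU U (x, z) = (U x, z) := rfl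

def transQ (e v : H) (r : ℂ) : (H × ℂ) →L[ℂ] (H × ℂ) :=
  ((ContinuousLinearMap.fst ℂ H ℂ) +
    (((innerSL ℂ v).comp (ContinuousLinearMap.fst ℂ H ℂ)
      + r • ContinuousLinearMap.snd ℂ H ℂ).smulRight e) +
    ((ContinuousLinearMap.snd ℂ H ℂ).smulRight v)).prod (ContinuousLinearMap.snd ℂ H ℂ)

lemma transQ_apply (e v : H) (r : ℂ) (x : H) (z : ℂ) :
    transQ e v r (x, z) = (x + ((inner ℂ v x : ℂ) + r * z) • e + z • v, z) := by
  simp [transQ, ContinuousLinearMap.smulRight_apply]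

-- hatA preservation

lemma hatA_dilD (e : H) (he : ‖e‖ = 1) (c : ℂ) (hc : c ≠ 0) (u v : H × ℂ) :
    hatA e (dilD e c u) (dilD e c v) = hatA e u v := by
  obtain ⟨x, z⟩ := u; obtain ⟨y, w⟩ := v
  have hee : (inner ℂ e e : ℂ) = 1 := by rw [inner_self_eq_norm_sq_to_K, he]; norm_num
  have hcc : (starRingEnd ℂ) c ≠ 0 := by simpa using hc
  simp only [hatA, dilD_apply, inner_add_left, inner_add_right, inner_sub_left,
    inner_sub_right, inner_smul_left, inner_smul_right, hee, map_mul, map_add, map_sub, map_one,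
    map_inv₀, Complex.conj_conj, mul_one]
  rw [← inner_conj_symm y e]
  field_simp
  ring

lemma dilD_comp (e : H) (he : ‖e‖ = 1) (c : ℂ) (hc : c ≠ 0) (p : H × ℂ) :
    dilD e c (dilD e c⁻¹ p) = p := by
  obtain ⟨x, z⟩ := p
  have hee : (inner ℂ e e : ℂ) = 1 := by rw [inner_self_eq_norm_sq_to_K, he]; norm_num
  have hcc : (starRingEnd ℂ) c ≠ 0 := by simpa using hc
  simp only [dilD_apply, inner_add_right, inner_smul_right, hee, mul_one, map_inv₀]
  rw [Prod.mk.injEq]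
  constructor
  · match_scalars <;> (field_simp; try ring)
  · field_simp

lemma hatA_liftU (e : H) (U : H →L[ℂ] H) (hUe : U e = e)
    (hUi : ∀ y₁ y₂ : H, (inner ℂ (U y₁) (U y₂) : ℂ) = inner ℂ y₁ y₂) (u v : H × ℂ) :
    hatA e (liftU U u) (liftU U v) = hatA e u v := by
  obtain ⟨x, z⟩ := u; obtain ⟨y, w⟩ := v
  have h1 : ∀ y : H, (inner ℂ e (U y) : ℂ) = inner ℂ e y := by
    intro y
    have := hUi e y; rwa [hUe] at this
  have h2 : ∀ y : H, (inner ℂ (U y) e : ℂ) = inner ℂ y e := by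
    intro y
    have := hUi y e; rwa [hUe] at this
  simp only [hatA, liftU_apply, h1, h2]
  congr 1
  have hx : U x - (inner ℂ e x : ℂ) • e = U (x - (inner ℂ e x : ℂ) • e) := by
    rw [map_sub, map_smul, hUe]
  have hy : U y - (inner ℂ e y : ℂ) • e = U (y - (inner ℂ e y : ℂ) • e) := by
    rw [map_sub, map_smul, hUe]
  rw [hx, hy, hUi]

lemma reflU_inner (w : H) (κ : ℝ) (hww : (inner ℂ w w : ℂ) = (κ : ℂ)) (hκ : (κ : ℂ) ≠ 0)
    (y₁ y₂ : H) : (inner ℂ (reflU w κ y₁) (reflU w κ y₂) : ℂ) = inner ℂ y₁ y₂ := by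
  simp only [reflU_apply, inner_sub_left, inner_sub_right, inner_smul_left, inner_smul_right,
    map_mul, map_div₀, Complex.conj_ofReal, map_ofNat, hww]
  rw [← inner_conj_symm y₁ w]
  field_simp
  ring

lemma reflU_invol (w : H) (κ : ℝ) (hww : (inner ℂ w w : ℂ) = (κ : ℂ)) (hκ : (κ : ℂ) ≠ 0)
    (x : H) : reflU w κ (reflU w κ x) = x := by
  simp only [reflU_apply, inner_sub_right, inner_smul_right, hww, smul_sub, smul_smul]
  have h : ((2 / κ : ℂ) * ((inner ℂ w x : ℂ) - 2 / κ * inner ℂ w x * κ)) = -((2/κ) * inner ℂ w x) := by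
    field_simp; ring
  rw [h]
  module

lemma hatA_transQ (e : H) (he : ‖e‖ = 1) (v : H) (r : ℂ) (hve : (inner ℂ v e : ℂ) = 0)
    (hvv : (inner ℂ v v : ℂ) = r + (starRingEnd ℂ) r) (u₁ u₂ : H × ℂ) :
    hatA e (transQ e v r u₁) (transQ e v r u₂) = hatA e u₁ u₂ := by
  obtain ⟨x, z⟩ := u₁; obtain ⟨y, w⟩ := u₂
  have hee : (inner ℂ e e : ℂ) = 1 := by rw [inner_self_eq_norm_sq_to_K, he]; norm_num
  have hev : (inner ℂ e v : ℂ) = 0 := by rw [← inner_conj_symm, hve, map_zero]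
  simp only [hatA, transQ_apply, inner_add_left, inner_add_right, inner_smul_left,
    inner_smul_right, inner_sub_left, inner_sub_right, hee, hve, hev, map_mul, map_add,
    Complex.conj_conj, mul_one, mul_zero, add_zero, zero_add, hvv]
  rw [← inner_conj_symm y v]
  ring

lemma transQ_comp (e : H) (he : ‖e‖ = 1) (v : H) (r : ℂ) (hve : (inner ℂ v e : ℂ) = 0)
    (hvv : (inner ℂ v v : ℂ) = r + (starRingEnd ℂ) r) (p : H × ℂ) :
    transQ e (-v) ((starRingEnd ℂ) r) (transQ e v r p) = p := by
  obtain ⟨x, z⟩ := p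
  simp only [transQ_apply, inner_neg_left, inner_add_right, inner_smul_right, hve, hvv,
    mul_zero, add_zero, smul_neg]
  rw [Prod.mk.injEq]
  constructor
  · match_scalars <;> ring
  · rfl

lemma key_conj (e : H) (he : ‖e‖ = 1) (lam c r s t : ℂ) (hc : c ≠ 0)
    (a' b' v : H) (U : H →L[ℂ] H)
    (hae : (inner ℂ a' e : ℂ) = 0) (hbe : (inner ℂ b' e : ℂ) = 0)
    (hve : (inner ℂ v e : ℂ) = 0) (hev : (inner ℂ e v : ℂ) = 0)
    (hea : (inner ℂ e a' : ℂ) = 0)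
    (hUe : U e = e) (hUei : ∀ y : H, (inner ℂ e (U y) : ℂ) = inner ℂ e y)
    (hUa : U a' = ((starRingEnd ℂ) c)⁻¹ • b')
    (hUba : ∀ y : H, (inner ℂ b' (U y) : ℂ) = c * inner ℂ a' y)
    (hvb : (inner ℂ v b' : ℂ) - (inner ℂ b' v : ℂ) = t - c * (starRingEnd ℂ) c * s)
    (T S : (H × ℂ) →L[ℂ] (H × ℂ))
    (hTf : ∀ (x : H) (z : ℂ), T (x, z) = lam •
      (((((inner ℂ e x : ℂ) + (inner ℂ a' (x - (inner ℂ e x : ℂ) • e) : ℂ) + s * z) • e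
          + (x - (inner ℂ e x : ℂ) • e) + z • a', z)) : H × ℂ))
    (hSf : ∀ (x : H) (z : ℂ), S (x, z) = lam •
      (((((inner ℂ e x : ℂ) + (inner ℂ b' (x - (inner ℂ e x : ℂ) • e) : ℂ) + t * z) • e
          + (x - (inner ℂ e x : ℂ) • e) + z • b', z)) : H × ℂ))
    (p : H × ℂ) :
    transQ e v r (liftU U (dilD e c (T p))) = S (transQ e v r (liftU U (dilD e c p))) := by
  obtain ⟨x, z⟩ := p
  have hee : (inner ℂ e e : ℂ) = 1 := by rw [inner_self_eq_norm_sq_to_K, he]; norm_num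
  have hcc : (starRingEnd ℂ) c ≠ 0 := by simpa using hc
  rw [hTf]
  simp only [Prod.smul_mk, dilD_apply, liftU_apply, transQ_apply, map_add, map_sub, map_smul,
    hUe, hUa, hSf, inner_add_right, inner_sub_right, inner_smul_right, hee, hve, hev, hea, hbe,
    hae, hUei, hUba, smul_eq_mul, mul_zero, mul_one, add_zero, zero_add, sub_zero]
  rw [Prod.mk.injEq]
  refine ⟨?_, ?_⟩
  · match_scalars
    · field_simp
      linear_combination (lam * z) * hvb
    all_goals ring
  · ring

lemma exists_mu (g : ℂ) :
    ∃ μ : ℂ, μ * (starRingEnd ℂ) μ = 1 ∧ μ * g = ((-(‖g‖) : ℝ) : ℂ) := by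
  by_cases hg : g = 0
  · exact ⟨1, by norm_num, by simp [hg]⟩
  · refine ⟨-((starRingEnd ℂ) g) / ‖g‖, ?_, ?_⟩
    · have h1 : (starRingEnd ℂ) g * g = ((‖g‖ : ℝ) : ℂ)^2 := by
        rw [mul_comm, Complex.mul_conj, Complex.normSq_eq_norm_sq]; push_cast; ring
      have h2 : ((‖g‖ : ℝ) : ℂ) ≠ 0 := by
        simpa using (norm_ne_zero_iff.mpr hg)
      rw [map_div₀, map_neg, Complex.conj_conj, Complex.conj_ofReal]
      field_simp
      linear_combination h1
    · have h1 : (starRingEnd ℂ) g * g = ((‖g‖ : ℝ) : ℂ)^2 := by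
        rw [mul_comm, Complex.mul_conj, Complex.normSq_eq_norm_sq]; push_cast; ring
      have h2 : ((‖g‖ : ℝ) : ℂ) ≠ 0 := by
        simpa using (norm_ne_zero_iff.mpr hg)
      field_simp
      push_cast
      linear_combination (-1:ℂ) * h1

end

section
variable {H : Type*} [NormedAddCommGroup H] [InnerProductSpace ℂ H] [CompleteSpace H]

/-- any two non-vertical Heisenberg translations `(λ, a', s)` and
`(λ, b', t)` are conjugate in `Ĝ` by an element fixing the line `ℂ·(e,0)`. -/
theorem nonvertical_heisenberg_conjugate
    (e : H) (he : ‖e‖ = 1) (lam : ℂ) (a' b' : H) (s t : ℂ)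
    (ha' : a' ≠ 0) (hb' : b' ≠ 0)
    (T S : (H × ℂ) →L[ℂ] (H × ℂ))
    (hT : IsHeisenberg e T lam a' s) (hS : IsHeisenberg e S lam b' t) :
    ∃ R : (H × ℂ) ≃L[ℂ] (H × ℂ), memGhat e (R : (H × ℂ) →L[ℂ] (H × ℂ)) ∧
      (∃ c : ℂ, R ((e, 0) : H × ℂ) = c • ((e, 0) : H × ℂ)) ∧
      ∀ v : H × ℂ, R (T (R.symm v)) = S v := by
  obtain ⟨hlam, haperp, hs0, hsre, hTG, hTf⟩ := hT
  obtain ⟨-, hbperp, ht0, htre, hSG, hSf⟩ := hS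
  have hee : (inner ℂ e e : ℂ) = 1 := by rw [inner_self_eq_norm_sq_to_K, he]; norm_num
  have hea : (inner ℂ e a' : ℂ) = 0 :=
    (Submodule.mem_orthogonal _ _).mp haperp e (Submodule.mem_span_singleton_self e)
  have hae : (inner ℂ a' e : ℂ) = 0 := by rw [← inner_conj_symm, hea, map_zero]
  have heb : (inner ℂ e b' : ℂ) = 0 :=
    (Submodule.mem_orthogonal _ _).mp hbperp e (Submodule.mem_span_singleton_self e)
  have hbe : (inner ℂ b' e : ℂ) = 0 := by rw [← inner_conj_symm, heb, map_zero]
  have hna : (0:ℝ) < ‖a'‖ := norm_pos_iff.mpr ha'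
  have hnb : (0:ℝ) < ‖b'‖ := norm_pos_iff.mpr hb'
  have hnaC : ((‖a'‖:ℝ):ℂ) ≠ 0 := by exact_mod_cast hna.ne'
  have hnbC : ((‖b'‖:ℝ):ℂ) ≠ 0 := by exact_mod_cast hnb.ne'
  have haa : (inner ℂ a' a' : ℂ) = ((‖a'‖:ℝ):ℂ)^2 := by rw [inner_self_eq_norm_sq_to_K]; norm_cast
  have hbb : (inner ℂ b' b' : ℂ) = ((‖b'‖:ℝ):ℂ)^2 := by rw [inner_self_eq_norm_sq_to_K]; norm_cast
  set g : ℂ := (inner ℂ b' a' : ℂ) with hgdef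
  have hab : (inner ℂ a' b' : ℂ) = (starRingEnd ℂ) g := by rw [hgdef, inner_conj_symm]
  obtain ⟨μ, hμ, hμg⟩ := exists_mu g
  set ν : ℝ := -(‖g‖) with hνdef
  have hν : ν ≤ 0 := neg_nonpos.mpr (norm_nonneg g)
  have hμg' : (starRingEnd ℂ) μ * (starRingEnd ℂ) g = ((ν:ℝ):ℂ) := by
    have h := congrArg (starRingEnd ℂ) hμg
    simpa [map_mul, Complex.conj_ofReal] using h
  have hμne : μ ≠ 0 := by
    intro h; rw [h] at hμ; simp at hμ
  have hμcne : (starRingEnd ℂ) μ ≠ 0 := by simpa using hμne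
  set κ : ℝ := 2 - 2 * (ν / (‖a'‖ * ‖b'‖)) with hκdef
  have hκpos : (0:ℝ) < κ := by
    have h1 : ν / (‖a'‖ * ‖b'‖) ≤ 0 :=
      div_nonpos_of_nonpos_of_nonneg hν (mul_pos hna hnb).le
    rw [hκdef]; nlinarith
  have hκC : ((κ:ℝ):ℂ) ≠ 0 := by exact_mod_cast hκpos.ne'
  have hκCC : ((κ:ℝ):ℂ) = 2 - 2 * (((ν:ℝ):ℂ) / (((‖a'‖:ℝ):ℂ) * ((‖b'‖:ℝ):ℂ))) := by
    rw [hκdef]; push_cast; ring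
  set c : ℂ := ((‖b'‖/‖a'‖ : ℝ) : ℂ) * (starRingEnd ℂ) μ with hcdef
  have hc : c ≠ 0 := by
    apply mul_ne_zero _ hμcne
    rw [Complex.ofReal_ne_zero]
    positivity
  have hccne : (starRingEnd ℂ) c ≠ 0 := by simpa using hc
  set w : H := (μ / ((‖a'‖:ℝ):ℂ)) • a' - (((‖b'‖:ℝ):ℂ))⁻¹ • b' with hwdef
  have hww : (inner ℂ w w : ℂ) = ((κ:ℝ):ℂ) := by
    rw [hwdef, hκCC]
    simp only [inner_sub_left, inner_sub_right, inner_smul_left, inner_smul_right,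
      map_div₀, map_inv₀, Complex.conj_ofReal, haa, hbb, hab, ← hgdef]
    field_simp
    linear_combination (((‖a'‖:ℝ):ℂ) * ((‖b'‖:ℝ):ℂ)) * hμ - hμg - hμg'
  have hwe : (inner ℂ w e : ℂ) = 0 := by
    simp [hwdef, inner_sub_left, inner_smul_left, hae, hbe]
  set U : H →L[ℂ] H := reflU w κ with hUdef
  have hUinner : ∀ y₁ y₂ : H, (inner ℂ (U y₁) (U y₂) : ℂ) = inner ℂ y₁ y₂ :=
    reflU_inner w κ hww hκC
  have hUinvol : ∀ y : H, U (U y) = y := reflU_invol w κ hww hκC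
  have hUe : U e = e := by
    rw [hUdef, reflU_apply, hwe]; simp
  have hUei : ∀ y : H, (inner ℂ e (U y) : ℂ) = inner ℂ e y := by
    intro y
    have h := hUinner e y; rwa [hUe] at h
  have hwa : (inner ℂ w a' : ℂ) = (starRingEnd ℂ) μ * ((‖a'‖:ℝ):ℂ) - g / ((‖b'‖:ℝ):ℂ) := by
    rw [hwdef]
    simp only [inner_sub_left, inner_smul_left, map_div₀, map_inv₀, Complex.conj_ofReal,
      haa, ← hgdef]
    field_simp
  have hκAB : ((κ:ℝ):ℂ) * (((‖a'‖:ℝ):ℂ) * ((‖b'‖:ℝ):ℂ))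
      = 2 * (((‖a'‖:ℝ):ℂ) * ((‖b'‖:ℝ):ℂ)) - 2 * ((ν:ℝ):ℂ) := by
    rw [hκCC]; field_simp
  have hUa' : (starRingEnd ℂ) c • U a' = b' := by
    rw [hUdef, reflU_apply, hwa, hwdef, hcdef]
    match_scalars
    · field_simp
      linear_combination (starRingEnd ℂ) (((‖b'‖:ℝ):ℂ) * (starRingEnd ℂ) μ / ((‖a'‖:ℝ):ℂ)) *
        (hκAB - 2 * (((‖a'‖:ℝ):ℂ) * ((‖b'‖:ℝ):ℂ)) * hμ + 2 * hμg)
    · simp only [map_mul, map_div₀, Complex.conj_ofReal, Complex.conj_conj]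
      field_simp
      linear_combination (2*((‖a'‖:ℝ):ℂ)*((‖b'‖:ℝ):ℂ)) * hμ - 2 * hμg - hκAB
  have hUa : U a' = ((starRingEnd ℂ) c)⁻¹ • b' := by
    rw [← hUa', inv_smul_smul₀ hccne]
  have hUb : U b' = (starRingEnd ℂ) c • a' := by
    have h := hUinvol a'
    rw [hUa, map_smul, inv_smul_eq_iff₀ hccne] at h
    exact h
  have hUba : ∀ y : H, (inner ℂ b' (U y) : ℂ) = c * inner ℂ a' y := by
    intro y
    calc (inner ℂ b' (U y) : ℂ) = inner ℂ (U (U b')) (U y) := by rw [hUinvol]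
      _ = inner ℂ (U b') y := hUinner _ y
      _ = c * inner ℂ a' y := by
          rw [hUb, inner_smul_left, Complex.conj_conj]
  have hccbar : c * (starRingEnd ℂ) c = ((‖b'‖^2/‖a'‖^2 : ℝ):ℂ) := by
    rw [hcdef]
    simp only [map_mul, Complex.conj_conj, Complex.conj_ofReal]
    push_cast
    field_simp
    linear_combination hμ
  set δ : ℂ := t - c * (starRingEnd ℂ) c * s with hδdef
  have hδre : δ.re = 0 := by
    rw [hδdef, hccbar]
    simp only [Complex.sub_re, Complex.mul_re, Complex.ofReal_re, Complex.ofReal_im,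
      htre, hsre]
    have : (‖b'‖^2/‖a'‖^2 : ℝ) * (1/2 * ‖a'‖^2) = 1/2 * ‖b'‖^2 := by
      field_simp
    simp only [zero_mul, sub_zero]
    rw [this]
    ring
  have hδI : δ = (δ.im : ℂ) * Complex.I := by
    conv_lhs => rw [← Complex.re_add_im δ]
    rw [hδre]
    simp
  set τ : ℝ := -δ.im / (2*‖b'‖^2) with hτdef
  set v : H := ((τ:ℂ) * Complex.I) • b' with hvdef
  have hve : (inner ℂ v e : ℂ) = 0 := by
    simp [hvdef, inner_smul_left, hbe]
  have hev : (inner ℂ e v : ℂ) = 0 := by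
    simp [hvdef, inner_smul_right, heb]
  set r : ℂ := ((τ^2*‖b'‖^2/2 : ℝ):ℂ) with hrdef
  have hrconj : (starRingEnd ℂ) r = r := by rw [hrdef, Complex.conj_ofReal]
  have hvv : (inner ℂ v v : ℂ) = r + (starRingEnd ℂ) r := by
    rw [hrconj, hvdef]
    simp only [inner_smul_left, inner_smul_right, hbb, map_mul, Complex.conj_ofReal,
      Complex.conj_I, hrdef]
    push_cast
    linear_combination (-((τ:ℂ)^2 * ((‖b'‖:ℝ):ℂ)^2)) * Complex.I_sq
  have hvb : (inner ℂ v b' : ℂ) - (inner ℂ b' v : ℂ) = t - c * (starRingEnd ℂ) c * s := by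
    rw [← hδdef, hvdef]
    simp only [inner_smul_left, inner_smul_right, hbb, map_mul, Complex.conj_ofReal,
      Complex.conj_I]
    rw [hτdef]
    have hb2 : ((‖b'‖:ℝ):ℂ)^2 ≠ 0 := pow_ne_zero 2 hnbC
    rw [hδI]
    push_cast
    field_simp
    ring
    simp
  have hLinv : Function.LeftInverse (liftU U) (liftU U) := by
    intro p; obtain ⟨x, z⟩ := p; rw [liftU_apply, liftU_apply, hUinvol]
  have hQinv1 : Function.LeftInverse (transQ e (-v) r) (transQ e v r) := by
    intro p
    have h := transQ_comp e he v r hve hvv p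
    rwa [hrconj] at h
  have hQinv2 : Function.RightInverse (transQ e (-v) r) (transQ e v r) := by
    intro p
    have hve' : (inner ℂ (-v) e : ℂ) = 0 := by rw [inner_neg_left, hve, neg_zero]
    have hvv' : (inner ℂ (-v) (-v) : ℂ) = r + (starRingEnd ℂ) r := by
      rw [inner_neg_neg, hvv]
    have h := transQ_comp e he (-v) r hve' hvv' p
    rwa [neg_neg, hrconj] at h
  have hDinv1 : Function.LeftInverse (dilD e c⁻¹) (dilD e c) := by
    intro p
    have h := dilD_comp e he c⁻¹ (inv_ne_zero hc) p
    rwa [inv_inv] at h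
  have hDinv2 : Function.RightInverse (dilD e c⁻¹) (dilD e c) :=
    fun p => dilD_comp e he c hc p
  let De : (H × ℂ) ≃L[ℂ] (H × ℂ) :=
    ContinuousLinearEquiv.equivOfInverse (dilD e c) (dilD e c⁻¹) hDinv1 hDinv2
  let Ue : (H × ℂ) ≃L[ℂ] (H × ℂ) :=
    ContinuousLinearEquiv.equivOfInverse (liftU U) (liftU U) hLinv hLinv
  let Qe : (H × ℂ) ≃L[ℂ] (H × ℂ) :=
    ContinuousLinearEquiv.equivOfInverse (transQ e v r) (transQ e (-v) r) hQinv1 hQinv2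
  have happ : ∀ q : H × ℂ,
      ((De.trans Ue).trans Qe) q = transQ e v r (liftU U (dilD e c q)) := fun q => rfl
  refine ⟨(De.trans Ue).trans Qe, ⟨?_, ?_⟩, ⟨c, ?_⟩, ?_⟩
  · exact ((De.trans Ue).trans Qe).bijective
  · intro u₁ u₂
    show hatA e (((De.trans Ue).trans Qe) u₁) (((De.trans Ue).trans Qe) u₂) = hatA e u₁ u₂
    rw [happ, happ, hatA_transQ e he v r hve hvv, hatA_liftU e U hUe hUinner,
      hatA_dilD e he c hc]
  · rw [happ]
    have h1 : dilD e c ((e, 0) : H × ℂ) = (c • e, 0) := by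
      rw [dilD_apply]
      rw [Prod.mk.injEq]
      constructor
      · rw [hee]; match_scalars; ring
      · simp
    rw [h1, liftU_apply, map_smul, hUe, transQ_apply]
    rw [inner_smul_right, hve]
    rw [Prod.smul_mk]
    rw [Prod.mk.injEq]
    constructor
    · match_scalars <;> ring
    · simp
  · intro p
    rw [happ, key_conj e he lam c r s t hc a' b' v U hae hbe hve hev hea hUe hUei hUa hUba hvb
      T S hTf hSf (((De.trans Ue).trans Qe).symm p), ← happ,
      ContinuousLinearEquiv.apply_symm_apply]

end
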